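/- Let {hₖ} be a sequence of analytic functions on the open unit disc 𝔻 such that the function z ↦ Σₖ |hₖ(z)| is bounded on 𝔻. Then the series Σₖ |hₖ(z)| converges uniformly on every compact subset of 𝔻. -/

import Mathlib

set_option maxHeartbeats 1000000

open Metric Complex Set Filter MeasureTheory intervalIntegral Real

/-- If `{hₖ}` are analytic on the open unit disc and `z ↦ Σₖ |hₖ(z)|` is bounded on the disc,
then the series `Σₖ |hₖ(z)|` converges uniformly on every compact subset of the disc. -/
theorem uniform_convergence_on_compacts (h : ℕ → ℂ → ℂ)
    (hanal : ∀ k, DifferentiableOn ℂ (h k) (Metric.ball (0 : ℂ) 1))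
    (M : ℝ)
    (hbdd : ∀ z ∈ Metric.ball (0 : ℂ) 1, ∀ s : Finset ℕ, ∑ k ∈ s, ‖h k z‖ ≤ M) :
    ∀ K ⊆ Metric.ball (0 : ℂ) 1, IsCompact K →
      TendstoUniformlyOn (fun (s : Finset ℕ) (z : ℂ) => ∑ k ∈ s, ‖h k z‖)
        (fun z => ∑' k, ‖h k z‖) Filter.atTop K := by
  intro K hK hKc
  obtain ⟨r', hr', hKr'⟩ := exists_lt_subset_ball hKc.isClosed hK
  set r : ℝ := max r' 0 with hrdef
  have hr1 : r < 1 := max_lt hr' one_pos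
  have hr0 : (0 : ℝ) ≤ r := le_max_right _ _
  set R : ℝ := (1 + r) / 2 with hRdef
  have hrR : r < R := by rw [hRdef]; linarith
  have hR1 : R < 1 := by rw [hRdef]; linarith
  have hR0 : (0 : ℝ) < R := lt_of_le_of_lt hr0 hrR
  have hKr : K ⊆ closedBall (0 : ℂ) r :=
    hKr'.trans (ball_subset_closedBall.trans
      (closedBall_subset_closedBall (le_max_left _ _)))
  have hπ : (0 : ℝ) < 2 * π := by positivity
  -- the circle of radius R lies in the unit ball
  have hmem : ∀ θ : ℝ, circleMap 0 R θ ∈ ball (0 : ℂ) 1 := by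
    intro θ
    rw [mem_ball_zero_iff]
    have : ‖circleMap 0 R θ‖ = |R| := norm_circleMap_zero R θ
    rw [this, abs_of_pos hR0]
    exact hR1
  have hnormmap : ∀ θ : ℝ, ‖circleMap 0 R θ‖ = R := by
    intro θ
    rw [norm_circleMap_zero R θ, abs_of_pos hR0]
  -- continuity on the circle
  have hcont : ∀ k : ℕ, Continuous fun θ : ℝ => ‖h k (circleMap 0 R θ)‖ := fun k =>
    ((hanal k).continuousOn.comp_continuous (continuous_circleMap 0 R) hmem).norm
  have hint : ∀ k : ℕ, IntervalIntegrable (fun θ : ℝ => ‖h k (circleMap 0 R θ)‖)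
      MeasureTheory.volume 0 (2 * π) := fun k => (hcont k).intervalIntegrable _ _
  -- the mean modulus on the circle
  set δ : ℕ → ℝ := fun k => ∫ θ in (0 : ℝ)..2 * π, ‖h k (circleMap 0 R θ)‖ with hδdef
  have hδ0 : ∀ k, 0 ≤ δ k := fun k =>
    intervalIntegral.integral_nonneg hπ.le fun θ _ => norm_nonneg _
  -- partial sums of δ are bounded
  have hδsum : Summable δ := by
    apply summable_of_sum_le hδ0
    intro s
    rw [hδdef, ← intervalIntegral.integral_finset_sum fun i _ => hint i]
    calc (∫ θ in (0 : ℝ)..2 * π, ∑ k ∈ s, ‖h k (circleMap 0 R θ)‖)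
        ≤ ∫ _ in (0 : ℝ)..2 * π, M := by
          apply intervalIntegral.integral_mono_on hπ.le
          · exact (continuous_finset_sum s fun i _ => hcont i).intervalIntegrable _ _
          · exact intervalIntegrable_const
          · intro θ _
            exact hbdd _ (hmem θ) s
      _ = (2 * π - 0) * M := by rw [intervalIntegral.integral_const, smul_eq_mul]
      _ = 2 * π * M := by ring
  set C : ℝ := (2 * π)⁻¹ * (R * (R - r)⁻¹) with hCdef
  have hC0 : 0 ≤ C := by
    have : (0:ℝ) < R - r := by linarith
    positivity
  -- the Cauchy estimate on K
  have hkey : ∀ k : ℕ, ∀ z ∈ K, ‖h k z‖ ≤ C * δ k := by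
    intro k z hz
    have hzr : ‖z‖ ≤ r := mem_closedBall_zero_iff.mp (hKr hz)
    have hzR : z ∈ ball (0 : ℂ) R := by
      rw [mem_ball_zero_iff]; exact lt_of_le_of_lt hzr hrR
    have hdiff : DifferentiableOn ℂ (h k) (closedBall (0 : ℂ) R) :=
      (hanal k).mono (closedBall_subset_ball hR1)
    have hcauchy := hdiff.circleIntegral_sub_inv_smul hzR
    have hval : ‖(∮ w in C(0, R), (w - z)⁻¹ • h k w)‖ = 2 * π * ‖h k z‖ := by
      rw [hcauchy, norm_smul]
      congr 1
      simp [map_mul, Complex.norm_real, abs_of_pos Real.pi_pos]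
    -- bound the circle integral by the integral of norms
    have hRr : (0:ℝ) < R - r := by linarith
    have hbound : ‖(∮ w in C(0, R), (w - z)⁻¹ • h k w)‖
        ≤ R * (R - r)⁻¹ * δ k := by
      have h1 : ‖(∮ w in C(0, R), (w - z)⁻¹ • h k w)‖
          ≤ ∫ θ in (0 : ℝ)..2 * π,
            ‖deriv (circleMap 0 R) θ • (circleMap 0 R θ - z)⁻¹ • h k (circleMap 0 R θ)‖ :=
        intervalIntegral.norm_integral_le_integral_norm hπ.le
      have h2 : ∀ θ : ℝ,
          ‖deriv (circleMap 0 R) θ • (circleMap 0 R θ - z)⁻¹ • h k (circleMap 0 R θ)‖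
            ≤ R * (R - r)⁻¹ * ‖h k (circleMap 0 R θ)‖ := by
        intro θ
        rw [norm_smul, norm_smul]
        have hd : ‖deriv (circleMap 0 R) θ‖ = R := by
          rw [deriv_circleMap, norm_mul, Complex.norm_I, mul_one,
            hnormmap θ]
        rw [hd, mul_assoc]
        apply mul_le_mul_of_nonneg_left _ hR0.le
        apply mul_le_mul_of_nonneg_right _ (norm_nonneg _)
        rw [norm_inv]
        apply inv_anti₀ hRr
        calc R - r ≤ ‖circleMap 0 R θ‖ - ‖z‖ := by rw [hnormmap θ]; linarith
          _ ≤ ‖circleMap 0 R θ - z‖ := norm_sub_norm_le _ _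
      calc ‖(∮ w in C(0, R), (w - z)⁻¹ • h k w)‖
          ≤ ∫ θ in (0 : ℝ)..2 * π,
              ‖deriv (circleMap 0 R) θ • (circleMap 0 R θ - z)⁻¹ • h k (circleMap 0 R θ)‖ := h1
        _ ≤ ∫ θ in (0 : ℝ)..2 * π, R * (R - r)⁻¹ * ‖h k (circleMap 0 R θ)‖ := by
            apply intervalIntegral.integral_mono_on hπ.le
            · have hc1 : Continuous fun θ : ℝ => deriv (circleMap 0 R) θ := by
                have he : (fun θ : ℝ => deriv (circleMap 0 R) θ)
                    = fun θ => circleMap 0 R θ * I := by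
                  funext θ; exact deriv_circleMap 0 R θ
                rw [he]; exact (continuous_circleMap 0 R).mul continuous_const
              have hc2 : Continuous fun θ : ℝ => (circleMap 0 R θ - z)⁻¹ :=
                ((continuous_circleMap 0 R).sub continuous_const).inv₀
                  fun θ => sub_ne_zero_of_ne (circleMap_ne_mem_ball hzR θ)
              have hc3 : Continuous fun θ : ℝ => h k (circleMap 0 R θ) :=
                (hanal k).continuousOn.comp_continuous (continuous_circleMap 0 R) hmem
              exact ((hc1.smul (hc2.smul hc3)).norm).intervalIntegrable _ _
            · exact ((hint k).const_mul _)
            · exact fun θ _ => h2 θ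
        _ = R * (R - r)⁻¹ * δ k := intervalIntegral.integral_const_mul _ _
    have h2π : 2 * π * ‖h k z‖ ≤ R * (R - r)⁻¹ * δ k := hval ▸ hbound
    rw [hCdef]
    have h2 : ‖h k z‖ ≤ R * (R - r)⁻¹ * δ k / (2 * π) := by
      rw [le_div_iff₀ hπ]; linarith
    calc ‖h k z‖ ≤ R * (R - r)⁻¹ * δ k / (2 * π) := h2
      _ = (2 * π)⁻¹ * (R * (R - r)⁻¹) * δ k := by ring
  -- conclude by the Weierstrass M-test
  have huSum : Summable fun k => C * δ k := hδsum.mul_left C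
  exact tendstoUniformlyOn_tsum huSum fun n x hx => by
    rw [Real.norm_eq_abs, _root_.abs_of_nonneg (norm_nonneg _)]; exact hkey n x hx
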